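/- Let k ≥ 1 and let v₁, …, vₙ and w₁, …, wₙ be vectors in ℤ^{k+1} with last coordinate zero, such that the truncations ṽ₁, …, ṽₙ ∈ ℤ^k span ℝ^k. Suppose there exists A ∈ GL_{k+1}(ℤ) mapping the set {±v₁, …, ±vₙ} bijectively onto {±w₁, …, ±wₙ}. Then there exists Ã ∈ GL_{k+1}(ℤ) mapping the set {±v₁, …, ±vₙ, ±e_{k+1}} bijectively onto {±w₁, …, ±wₙ, ±e_{k+1}} with Ã e_{k+1} = e_{k+1}. (Inflation of perfect cones is well defined on GL-orbits.) -/

import Mathlib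

open Matrix

/-- Let `v₁, …, vₙ, w₁, …, wₙ ∈ ℤ^{k+1}` have last coordinate zero, with
the truncations `ṽᵢ ∈ ℤ^k` spanning `ℝ^k`. If some `A ∈ GL_{k+1}(ℤ)` maps `{±vᵢ}`
bijectively onto `{±wᵢ}`, then some `Ã ∈ GL_{k+1}(ℤ)` maps `{±vᵢ} ∪ {±e_{k+1}}`
bijectively onto `{±wᵢ} ∪ {±e_{k+1}}` with `Ã e_{k+1} = e_{k+1}`. -/
theorem inflation_well_defined
    (k n : ℕ) (hk : 1 ≤ k) (v w : Fin n → Fin (k + 1) → ℤ)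
    (hv : ∀ i, v i (Fin.last k) = 0) (hw : ∀ i, w i (Fin.last k) = 0)
    (hspan : Submodule.span ℝ
      (Set.range fun i => fun j : Fin k => ((v i j.castSucc : ℝ))) = ⊤)
    (A : Matrix (Fin (k + 1)) (Fin (k + 1)) ℤ) (hA : IsUnit A.det)
    (himg : (fun x => A.mulVec x) '' {x | ∃ i, x = v i ∨ x = -v i}
      = {x | ∃ i, x = w i ∨ x = -w i}) :
    ∃ B : Matrix (Fin (k + 1)) (Fin (k + 1)) ℤ, IsUnit B.det ∧
      (fun x => B.mulVec x) ''
          ({x | ∃ i, x = v i ∨ x = -v i} ∪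
            {Pi.single (Fin.last k) 1, -Pi.single (Fin.last k) 1})
        = {x | ∃ i, x = w i ∨ x = -w i} ∪
            {Pi.single (Fin.last k) 1, -Pi.single (Fin.last k) 1} ∧
      B.mulVec (Pi.single (Fin.last k) 1) = Pi.single (Fin.last k) 1 := by
  classical
  -- last row of A vanishes off the diagonal
  have hrow : ∀ j : Fin k, A (Fin.last k) j.castSucc = 0 := by
    have hAv : ∀ i, (A.mulVec (v i)) (Fin.last k) = 0 := by
      intro i
      have hmem : A.mulVec (v i) ∈ {x | ∃ i, x = w i ∨ x = -w i} := by
        rw [← himg]; exact ⟨v i, ⟨i, Or.inl rfl⟩, rfl⟩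
      obtain ⟨j, h | h⟩ := hmem
      · rw [h]; exact hw j
      · rw [h]; simp [hw j]
    have hsum : ∀ i, ∑ j : Fin k, A (Fin.last k) j.castSucc * v i j.castSucc = 0 := by
      intro i
      have h := hAv i
      rw [Matrix.mulVec, dotProduct, Fin.sum_univ_castSucc] at h
      simpa [hv i] using h
    set c : Fin k → ℝ := fun j => (A (Fin.last k) j.castSucc : ℝ) with hc
    have key : ∀ x : Fin k → ℝ, x ∈ Submodule.span ℝ
        (Set.range fun i => fun j : Fin k => ((v i j.castSucc : ℝ))) →
        ∑ j, c j * x j = 0 := by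
      intro x hx
      induction hx using Submodule.span_induction with
      | mem x hx =>
          obtain ⟨i, rfl⟩ := hx
          have h0 := hsum i
          have : ((∑ j : Fin k, A (Fin.last k) j.castSucc * v i j.castSucc : ℤ) : ℝ) = 0 := by
            rw [h0]; simp
          push_cast at this
          simpa [hc] using this
      | zero => simp
      | add x y _ _ hx hy =>
          simp only [Pi.add_apply, mul_add, Finset.sum_add_distrib, hx, hy, add_zero]
      | smul a x _ hx =>
          have : ∑ j, c j * (a • x) j = a * ∑ j, c j * x j := by
            rw [Finset.mul_sum]
            refine Finset.sum_congr rfl fun j _ => ?_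
            simp [mul_left_comm]
          rw [this, hx, mul_zero]
    intro j
    have hj : c j = 0 := by
      have := key (Pi.single j 1) (by rw [hspan]; trivial)
      simpa [Pi.single_apply, mul_ite, Finset.sum_ite_eq'] using this
    exact_mod_cast show ((A (Fin.last k) j.castSucc : ℤ) : ℝ) = 0 from hj
  have hrow' : ∀ j : Fin (k+1), j ≠ Fin.last k → A (Fin.last k) j = 0 := by
    intro j hj
    obtain ⟨j', rfl⟩ := Fin.exists_castSucc_eq.mpr hj
    exact hrow j'
  -- B : replace last column of A by e_last
  set e : Fin (k+1) → ℤ := Pi.single (Fin.last k) 1 with he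
  set B : Matrix (Fin (k+1)) (Fin (k+1)) ℤ := A.updateCol (Fin.last k) e with hB
  -- B and A agree on vectors whose last coordinate is 0
  have hagree : ∀ x : Fin (k+1) → ℤ, x (Fin.last k) = 0 → B.mulVec x = A.mulVec x := by
    intro x hx
    funext i
    rw [Matrix.mulVec, Matrix.mulVec, dotProduct, dotProduct,
      Fin.sum_univ_castSucc, Fin.sum_univ_castSucc]
    congr 1
    · refine Finset.sum_congr rfl fun j _ => ?_
      rw [hB, Matrix.updateCol_apply, if_neg (Fin.castSucc_lt_last j).ne]
    · rw [hx, mul_zero, mul_zero]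
  -- B fixes e
  have hBe : B.mulVec e = e := by
    funext i
    rw [he, Matrix.mulVec, dotProduct]
    rw [Finset.sum_eq_single (Fin.last k)]
    · rw [hB, Matrix.updateCol_apply, if_pos rfl, Pi.single_eq_same, mul_one]
    · intro b _ hb; rw [Pi.single_eq_of_ne hb, mul_zero]
    · intro h; exact absurd (Finset.mem_univ _) h
  -- determinant
  have hdetB : IsUnit B.det := by
    have hexp : ∀ M : Matrix (Fin (k+1)) (Fin (k+1)) ℤ,
        (∀ j : Fin (k+1), j ≠ Fin.last k → M (Fin.last k) j = 0) →
        M.det = (-1 : ℤ) ^ ((Fin.last k : ℕ) + (Fin.last k : ℕ)) * M (Fin.last k) (Fin.last k) *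
          (M.submatrix (Fin.last k).succAbove (Fin.last k).succAbove).det := by
      intro M hM
      rw [Matrix.det_succ_row M (Fin.last k)]
      rw [Finset.sum_eq_single (Fin.last k)]
      · intro b _ hb; rw [hM b hb]; ring
      · intro h; exact absurd (Finset.mem_univ _) h
    have hBrow : ∀ j : Fin (k+1), j ≠ Fin.last k → B (Fin.last k) j = 0 := by
      intro j hj
      rw [hB, Matrix.updateCol_apply, if_neg hj]
      exact hrow' j hj
    have hsub : B.submatrix (Fin.last k).succAbove (Fin.last k).succAbove
        = A.submatrix (Fin.last k).succAbove (Fin.last k).succAbove := by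
      funext i j
      rw [Matrix.submatrix_apply, Matrix.submatrix_apply, hB, Matrix.updateCol_apply,
        if_neg (Fin.succAbove_ne _ j)]
    have hdA := hexp A hrow'
    have hdB := hexp B hBrow
    rw [hdA] at hA
    rw [hdB, hsub, hB, Matrix.updateCol_apply, if_pos rfl, he, Pi.single_eq_same]
    have h1 : IsUnit ((A.submatrix (Fin.last k).succAbove (Fin.last k).succAbove).det) :=
      isUnit_of_mul_isUnit_right hA
    have h2 : IsUnit ((-1 : ℤ) ^ ((Fin.last k : ℕ) + (Fin.last k : ℕ))) :=
      (IsUnit.neg isUnit_one).pow _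
    exact (h2.mul isUnit_one).mul h1
  refine ⟨B, hdetB, ?_, hBe⟩
  have hS : ∀ x ∈ {x : Fin (k+1) → ℤ | ∃ i, x = v i ∨ x = -v i}, x (Fin.last k) = 0 := by
    rintro x ⟨i, rfl | rfl⟩
    · exact hv i
    · simp [hv i]
  rw [Set.image_union]
  congr 1
  · rw [← himg]
    exact Set.image_congr fun x hx => hagree x (hS x hx)
  · have hBne : B.mulVec (-e) = -e := by rw [Matrix.mulVec_neg, hBe]
    rw [Set.image_pair]
    rw [hBe, hBne]
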